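/- Let K be a Γ-convex body with extended support function H and let η ∈ 𝓕. The intersection of K with its support plane of inward normal η is a single point p if and only if H is differentiable at η; in that case p = ∇_η H, the gradient of H at η with respect to the Minkowski bilinear form. -/

import Mathlib

open Pointwise

noncomputable section

/-- The Minkowski bilinear form on ℝ^{d+1}. -/
def mink (d : ℕ) (x y : Fin (d+1) → ℝ) : ℝ :=
  (∑ i : Fin d, x i.castSucc * y i.castSucc) - x (Fin.last d) * y (Fin.last d)

/-- The open future cone. -/
def FutureCone (d : ℕ) : Set (Fin (d+1) → ℝ) :=
  {x | mink d x x < 0 ∧ 0 < x (Fin.last d)}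

/-- The hyperboloid model of hyperbolic space. -/
def Hyperboloid (d : ℕ) : Set (Fin (d+1) → ℝ) :=
  {x | mink d x x = -1 ∧ 0 < x (Fin.last d)}

/-- A Fuchsian group: linear isometries of the Minkowski form preserving the future
cone and acting freely cocompactly on the hyperboloid. -/
structure IsFuchsian (d : ℕ)
    (Γ : Subgroup ((Fin (d+1) → ℝ) ≃ₗ[ℝ] (Fin (d+1) → ℝ))) : Prop where
  isom : ∀ γ ∈ Γ, ∀ x y, mink d (γ x) (γ y) = mink d x y
  cone : ∀ γ ∈ Γ, ∀ x ∈ FutureCone d, γ x ∈ FutureCone d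
  free : ∀ γ ∈ Γ, γ ≠ 1 → ∀ x ∈ Hyperboloid d, γ x ≠ x
  cocompact : ∃ C : Set (Fin (d+1) → ℝ), IsCompact C ∧ C ⊆ Hyperboloid d ∧
    ∀ x ∈ Hyperboloid d, ∃ γ ∈ Γ, ∃ c ∈ C, γ c = x

/-- A Γ-convex (Fuchsian convex) body. -/
structure IsFuchsianConvexBody (d : ℕ)
    (Γ : Subgroup ((Fin (d+1) → ℝ) ≃ₗ[ℝ] (Fin (d+1) → ℝ)))
    (K : Set (Fin (d+1) → ℝ)) : Prop where
  nonempty : K.Nonempty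
  isClosed : IsClosed K
  convex : Convex ℝ K
  subset : K ⊆ FutureCone d
  proper : K ≠ FutureCone d
  invariant : ∀ γ ∈ Γ, (⇑γ) '' K = K

namespace Aux

variable {d : ℕ}

lemma mink_sub_left (x y u : Fin (d+1) → ℝ) :
    mink d (x - y) u = mink d x u - mink d y u := by
  simp [mink, sub_mul, Finset.sum_sub_distrib]; ring

lemma mink_sub_right (x u v : Fin (d+1) → ℝ) :
    mink d x (u - v) = mink d x u - mink d x v := by
  simp [mink, mul_sub, Finset.sum_sub_distrib]; ring

/-- spatial norm -/
def sp (d : ℕ) (x : Fin (d+1) → ℝ) : ℝ := Real.sqrt (∑ i : Fin d, x i.castSucc ^ 2)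

lemma sp_nonneg (x : Fin (d+1) → ℝ) : 0 ≤ sp d x := Real.sqrt_nonneg _

lemma abs_coord_le_sp (x : Fin (d+1) → ℝ) (i : Fin d) : |x i.castSucc| ≤ sp d x := by
  rw [← Real.sqrt_sq_eq_abs]
  exact Real.sqrt_le_sqrt (Finset.single_le_sum (f := fun j : Fin d => x j.castSucc ^ 2)
    (fun j _ => sq_nonneg _) (Finset.mem_univ i))

lemma sp_sq (x : Fin (d+1) → ℝ) : sp d x ^ 2 = ∑ i : Fin d, x i.castSucc ^ 2 :=
  Real.sq_sqrt (Finset.sum_nonneg fun j _ => sq_nonneg _)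

lemma mink_self (x : Fin (d+1) → ℝ) : mink d x x = sp d x ^ 2 - x (Fin.last d) ^ 2 := by
  rw [sp_sq]; simp [mink, pow_two]

lemma sp_lt_last {x : Fin (d+1) → ℝ} (hx : x ∈ FutureCone d) : sp d x < x (Fin.last d) := by
  have h1 := hx.1
  rw [mink_self] at h1
  nlinarith [sp_nonneg x, hx.2]

lemma mem_cone_of_sp_lt {x : Fin (d+1) → ℝ} (h : sp d x < x (Fin.last d)) :
    x ∈ FutureCone d := by
  have h0 : 0 < x (Fin.last d) := lt_of_le_of_lt (sp_nonneg x) h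
  refine ⟨?_, h0⟩
  rw [mink_self]
  nlinarith [sp_nonneg x]

/-- Cauchy–Schwarz for the spatial part. -/
lemma spatial_cs (x y : Fin (d+1) → ℝ) :
    (∑ i : Fin d, x i.castSucc * y i.castSucc) ≤ sp d x * sp d y :=
  Real.sum_mul_le_sqrt_mul_sqrt _ _ _

/-- Reverse Cauchy–Schwarz bound. -/
lemma mink_le_bound {x ζ : Fin (d+1) → ℝ} (hx : sp d x ≤ x (Fin.last d)) :
    mink d x ζ ≤ -(x (Fin.last d) * (ζ (Fin.last d) - sp d ζ)) := by
  have h1 : (∑ i : Fin d, x i.castSucc * ζ i.castSucc) ≤ sp d x * sp d ζ := spatial_cs x ζ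
  have h2 : sp d x * sp d ζ ≤ x (Fin.last d) * sp d ζ :=
    mul_le_mul_of_nonneg_right hx (sp_nonneg ζ)
  simp only [mink]
  nlinarith

lemma norm_le_of_last_le {x : Fin (d+1) → ℝ} {M : ℝ} (hx : sp d x ≤ x (Fin.last d))
    (hM : x (Fin.last d) ≤ M) : ‖x‖ ≤ M := by
  have hM0 : 0 ≤ M := le_trans (le_trans (sp_nonneg x) hx) hM
  rw [pi_norm_le_iff_of_nonneg hM0]
  intro i
  induction i using Fin.lastCases with
  | last => rw [Real.norm_eq_abs, abs_of_nonneg (le_trans (sp_nonneg x) hx)]; exact hM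
  | cast j => exact le_trans (abs_coord_le_sp x j) (le_trans hx hM)

lemma abs_mink_le (x u : Fin (d+1) → ℝ) : |mink d x u| ≤ (d+1) * ‖x‖ * ‖u‖ := by
  have key : ∀ j : Fin (d+1), |x j * u j| ≤ ‖x‖ * ‖u‖ := by
    intro j
    rw [abs_mul]
    have hx := norm_le_pi_norm x j
    have hu := norm_le_pi_norm u j
    rw [Real.norm_eq_abs] at hx hu
    exact mul_le_mul hx hu (abs_nonneg _) (norm_nonneg x)
  have h1 : |∑ i : Fin d, x i.castSucc * u i.castSucc| ≤ (d : ℝ) * (‖x‖ * ‖u‖) := by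
    calc |∑ i : Fin d, x i.castSucc * u i.castSucc|
        ≤ ∑ i : Fin d, |x i.castSucc * u i.castSucc| := Finset.abs_sum_le_sum_abs _ _
      _ ≤ ∑ _i : Fin d, ‖x‖ * ‖u‖ := Finset.sum_le_sum fun i _ => key _
      _ = (d : ℝ) * (‖x‖ * ‖u‖) := by simp [mul_comm]
  have h2 := key (Fin.last d)
  have := abs_sub (∑ i : Fin d, x i.castSucc * u i.castSucc)
    (x (Fin.last d) * u (Fin.last d))
  simp only [mink]
  push_cast
  calc |(∑ i : Fin d, x i.castSucc * u i.castSucc) - x (Fin.last d) * u (Fin.last d)|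
      ≤ |∑ i : Fin d, x i.castSucc * u i.castSucc| + |x (Fin.last d) * u (Fin.last d)| :=
        abs_sub _ _
    _ ≤ (d : ℝ) * (‖x‖ * ‖u‖) + ‖x‖ * ‖u‖ := add_le_add h1 h2
    _ = ((d : ℝ) + 1) * ‖x‖ * ‖u‖ := by ring

lemma continuous_mink_left (ζ : Fin (d+1) → ℝ) : Continuous fun x => mink d x ζ := by
  unfold mink
  fun_prop

lemma continuous_sp : Continuous (sp d) := by
  unfold sp
  fun_prop

lemma isOpen_cone : IsOpen (FutureCone d) := by
  have : FutureCone d = {x : Fin (d+1) → ℝ | sp d x - x (Fin.last d) < 0} := by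
    ext x
    constructor
    · intro hx; simpa using sub_neg.2 (sp_lt_last hx)
    · intro hx; exact mem_cone_of_sp_lt (sub_neg.1 hx)
  rw [this]
  exact isOpen_lt (continuous_sp.sub (continuous_apply _)) continuous_const

/-- mink as a continuous linear map in the second variable. -/
def minkCLM (d : ℕ) (p : Fin (d+1) → ℝ) : (Fin (d+1) → ℝ) →L[ℝ] ℝ :=
  LinearMap.toContinuousLinearMap
    { toFun := fun u => mink d p u
      map_add' := by intro u v; simp [mink, mul_add, Finset.sum_add_distrib]; ring
      map_smul' := by
        intro c u
        simp only [mink, Pi.smul_apply, smul_eq_mul, RingHom.id_apply, mul_sub, Finset.mul_sum]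
        congr 1
        · exact Finset.sum_congr rfl fun i _ => by ring
        · ring }

@[simp] lemma minkCLM_apply (p u : Fin (d+1) → ℝ) : minkCLM d p u = mink d p u := rfl

lemma mink_nondegenerate {x : Fin (d+1) → ℝ} (h : ∀ u, mink d x u = 0) : x = 0 := by
  funext j
  induction j using Fin.lastCases with
  | last =>
    have := h (Pi.single (Fin.last d) 1)
    simp only [mink] at this
    rw [Finset.sum_eq_zero (fun i _ => by
      rw [Pi.single_eq_of_ne (Fin.castSucc_lt_last i).ne, mul_zero])] at this
    simpa using this
  | cast k =>
    have := h (Pi.single (Fin.castSucc k) 1)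
    simp only [mink] at this
    rw [Finset.sum_eq_single k (fun i _ hik => by
      rw [Pi.single_eq_of_ne (fun he => hik (Fin.castSucc_injective d he)), mul_zero])
      (fun hk => absurd (Finset.mem_univ k) hk)] at this
    rw [Pi.single_eq_of_ne (Fin.castSucc_lt_last k).ne'] at this
    simpa using this

lemma H_nonpos {K : Set (Fin (d+1) → ℝ)} (hsub : K ⊆ FutureCone d)
    {ζ : Fin (d+1) → ℝ} (hζ : ζ ∈ FutureCone d) {Hζ : ℝ}
    (hlub : IsLUB ((fun x => mink d x ζ) '' K) Hζ) : Hζ ≤ 0 := by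
  apply hlub.2
  rintro _ ⟨x, hx, rfl⟩
  have h1 : sp d x ≤ x (Fin.last d) := (sp_lt_last (hsub hx)).le
  have h2 := mink_le_bound (ζ := ζ) h1
  have h3 : 0 < x (Fin.last d) := (hsub hx).2
  have h4 : 0 < ζ (Fin.last d) - sp d ζ := sub_pos.2 (sp_lt_last hζ)
  nlinarith

lemma attain {K : Set (Fin (d+1) → ℝ)} (hne : K.Nonempty) (hcl : IsClosed K)
    (hsub : K ⊆ FutureCone d) {ζ : Fin (d+1) → ℝ} (hζ : ζ ∈ FutureCone d) {Hζ : ℝ}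
    (hlub : IsLUB ((fun x => mink d x ζ) '' K) Hζ) :
    ∃ x ∈ K, mink d x ζ = Hζ ∧ ‖x‖ ≤ (1 - Hζ) / (ζ (Fin.last d) - sp d ζ) := by
  set ε := ζ (Fin.last d) - sp d ζ with hεdef
  have hε : 0 < ε := sub_pos.2 (sp_lt_last hζ)
  -- any near-maximizer is bounded
  have hbdd : ∀ x ∈ K, Hζ - 1 ≤ mink d x ζ → ‖x‖ ≤ (1 - Hζ) / ε := by
    intro x hx hx1
    have h1 : sp d x ≤ x (Fin.last d) := (sp_lt_last (hsub hx)).le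
    have h2 := mink_le_bound (ζ := ζ) h1
    have h3 : x (Fin.last d) ≤ (1 - Hζ) / ε := by
      rw [le_div_iff₀ hε]
      rw [← hεdef] at h2
      linarith
    exact norm_le_of_last_le h1 h3
  obtain ⟨v, hvmem, hv1, _⟩ := hlub.exists_between (b := Hζ - 1) (by linarith)
  obtain ⟨x₀, hx₀K, hx₀⟩ := hvmem
  have hx₀' : mink d x₀ ζ = v := hx₀
  have hx₀b : Hζ - 1 ≤ mink d x₀ ζ := by rw [hx₀']; linarith
  set S := (K ∩ {x | Hζ - 1 ≤ mink d x ζ}) ∩ Metric.closedBall 0 ((1 - Hζ) / ε) with hSdef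
  have hScompact : IsCompact S :=
    (isCompact_closedBall 0 _).inter_left
      (hcl.inter (isClosed_le continuous_const (continuous_mink_left ζ)))
  have hx₀S : x₀ ∈ S :=
    ⟨⟨hx₀K, hx₀b⟩, by rw [Metric.mem_closedBall, dist_zero_right]; exact hbdd _ hx₀K hx₀b⟩
  obtain ⟨z, hzS, hzmax⟩ := hScompact.exists_isMaxOn ⟨x₀, hx₀S⟩
    ((continuous_mink_left ζ).continuousOn)
  have hub : ∀ y ∈ K, mink d y ζ ≤ mink d z ζ := by
    intro y hy
    rcases le_or_gt (Hζ - 1) (mink d y ζ) with h | h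
    · exact hzmax ⟨⟨hy, h⟩, by rw [Metric.mem_closedBall, dist_zero_right]; exact hbdd _ hy h⟩
    · have := hzmax hx₀S
      simp only [Set.mem_setOf_eq] at this ⊢
      linarith
  have h1 : Hζ ≤ mink d z ζ := hlub.2 (by rintro _ ⟨y, hy, rfl⟩; exact hub y hy)
  have h2 : mink d z ζ ≤ Hζ := hlub.1 ⟨z, hzS.1.1, rfl⟩
  exact ⟨z, hzS.1.1, le_antisymm h2 h1, hbdd _ hzS.1.1 hzS.1.2⟩

lemma key {K : Set (Fin (d+1) → ℝ)} (hne : K.Nonempty) (hcl : IsClosed K)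
    (hsub : K ⊆ FutureCone d) {H : (Fin (d+1) → ℝ) → ℝ}
    (hH : ∀ ζ ∈ FutureCone d, IsLUB ((fun x => mink d x ζ) '' K) (H ζ))
    {η : Fin (d+1) → ℝ} (hη : η ∈ FutureCone d) {p : Fin (d+1) → ℝ}
    (hp : K ∩ {y | mink d y η = H η} = {p}) :
    HasFDerivWithinAt H (minkCLM d p) (FutureCone d) η := by
  have hpmem : p ∈ K ∩ {y | mink d y η = H η} := by rw [hp]; exact Set.mem_singleton p
  obtain ⟨hpK, hpη⟩ := hpmem
  have hpη : mink d p η = H η := hpη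
  have hub : ∀ x ∈ K, ∀ ζ ∈ FutureCone d, mink d x ζ ≤ H ζ :=
    fun x hx ζ hζ => (hH ζ hζ).1 ⟨x, hx, rfl⟩
  have hHη0 : H η ≤ 0 := H_nonpos hsub hη (hH η hη)
  set ε₀ := η (Fin.last d) - sp d η with hε₀def
  have hε₀ : 0 < ε₀ := sub_pos.2 (sp_lt_last hη)
  have hUopen : IsOpen {ζ : Fin (d+1) → ℝ | ε₀/2 < ζ (Fin.last d) - sp d ζ} :=
    isOpen_lt continuous_const ((continuous_apply _).sub continuous_sp)
  have hηU : η ∈ {ζ : Fin (d+1) → ℝ | ε₀/2 < ζ (Fin.last d) - sp d ζ} := by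
    simp only [Set.mem_setOf_eq]; linarith
  obtain ⟨r, hr, hball⟩ := Metric.isOpen_iff.1 hUopen η hηU
  have hballcone : ∀ ζ ∈ Metric.ball η r, ζ ∈ FutureCone d := fun ζ hζ =>
    mem_cone_of_sp_lt (by have := hball hζ; simp only [Set.mem_setOf_eq] at this; linarith)
  set M := (1 + ((d:ℝ)+1) * ‖p‖ * r - H η) / (ε₀/2) with hMdef
  have hBnn : (0:ℝ) ≤ 1 + ((d:ℝ)+1) * ‖p‖ * r - H η := by
    have : (0:ℝ) ≤ ((d:ℝ)+1) * ‖p‖ * r := by positivity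
    linarith
  have hM0 : 0 ≤ M := div_nonneg hBnn (by linarith)
  -- lower bound for H on the ball
  have hHlow : ∀ ζ ∈ Metric.ball η r, H η - ((d:ℝ)+1) * ‖p‖ * r ≤ H ζ := by
    intro ζ hζ
    have hζc := hballcone ζ hζ
    have h1 : mink d p ζ ≤ H ζ := hub p hpK ζ hζc
    have h2 : |mink d p (ζ - η)| ≤ ((d:ℝ)+1) * ‖p‖ * ‖ζ - η‖ := by
      have := abs_mink_le p (ζ - η); push_cast at this; linarith
    have h3 : ‖ζ - η‖ < r := by rw [← dist_eq_norm]; exact hζ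
    have h4 : mink d p (ζ - η) = mink d p ζ - mink d p η := mink_sub_right p ζ η
    have hp0 : (0:ℝ) ≤ ((d:ℝ)+1) * ‖p‖ := by positivity
    have h5 : ((d:ℝ)+1) * ‖p‖ * ‖ζ - η‖ ≤ ((d:ℝ)+1) * ‖p‖ * r :=
      mul_le_mul_of_nonneg_left h3.le hp0
    have h6 := (abs_le.1 h2).1
    rw [h4, hpη] at h6
    linarith
  -- maximizers on the ball are uniformly bounded
  have hmax : ∀ ζ ∈ Metric.ball η r, ∃ x ∈ K, mink d x ζ = H ζ ∧ ‖x‖ ≤ M := by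
    intro ζ hζ
    have hζc := hballcone ζ hζ
    obtain ⟨x, hxK, hxeq, hxb⟩ := attain hne hcl hsub hζc (hH ζ hζc)
    refine ⟨x, hxK, hxeq, le_trans hxb ?_⟩
    have h7 := hHlow ζ hζ
    have h8 := hball hζ
    simp only [Set.mem_setOf_eq] at h8
    exact div_le_div₀ hBnn (by linarith) (by linarith) h8.le
  -- Step A: maximizers for nearby ζ are close to p
  have hclose : ∀ ε > (0:ℝ), ∃ r' > (0:ℝ), r' ≤ r ∧
      ∀ ζ ∈ Metric.ball η r', ∀ x ∈ K, ‖x‖ ≤ M → mink d x ζ = H ζ → ‖x - p‖ ≤ ε := by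
    intro ε hεpos
    set Cs := (K ∩ Metric.closedBall 0 M) ∩ {x | ε ≤ ‖x - p‖} with hCsdef
    have hCscompact : IsCompact Cs :=
      ((isCompact_closedBall 0 M).inter_left hcl).inter_right
        (isClosed_le continuous_const (continuous_id.sub continuous_const).norm)
    rcases Cs.eq_empty_or_nonempty with hCse | hCsne
    · refine ⟨r, hr, le_refl r, fun ζ hζ x hxK hxM hxeq => ?_⟩
      by_contra hcon
      push_neg at hcon
      have : x ∈ Cs := ⟨⟨hxK, by rw [Metric.mem_closedBall, dist_zero_right]; exact hxM⟩,
        hcon.le⟩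
      rw [hCse] at this
      exact this
    · obtain ⟨z, hzCs, hzmax⟩ := hCscompact.exists_isMaxOn hCsne
        (continuous_mink_left η).continuousOn
      have hzK : z ∈ K := hzCs.1.1
      have hδ : 0 < H η - mink d z η := by
        rcases lt_or_eq_of_le (hub z hzK η hη) with h | h
        · linarith
        · exfalso
          have : z ∈ K ∩ {y | mink d y η = H η} := ⟨hzK, h⟩
          rw [hp] at this
          have hzp : z = p := this
          have := hzCs.2
          simp only [Set.mem_setOf_eq, hzp, sub_self, norm_zero] at this
          linarith
      set δ := H η - mink d z η with hδdef
      set A : ℝ := ((d:ℝ)+1) * M + ((d:ℝ)+1) * ‖p‖ + 1 with hAdef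
      have hA1 : (0:ℝ) < A := by
        have h1 : (0:ℝ) ≤ ((d:ℝ)+1) * M := by positivity
        have h2 : (0:ℝ) ≤ ((d:ℝ)+1) * ‖p‖ := by positivity
        linarith
      refine ⟨min r (δ / A), lt_min hr (div_pos hδ hA1), min_le_left _ _,
        fun ζ hζ x hxK hxM hxeq => ?_⟩
      by_contra hcon
      push_neg at hcon
      have hζr : ζ ∈ Metric.ball η r := Metric.ball_subset_ball (min_le_left _ _) hζ
      have hζc := hballcone ζ hζr
      have hxCs : x ∈ Cs := ⟨⟨hxK, by rw [Metric.mem_closedBall, dist_zero_right]; exact hxM⟩,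
        hcon.le⟩
      have hxz : mink d x η ≤ mink d z η := hzmax hxCs
      set t := ‖ζ - η‖ with htdef
      have ht0 : 0 ≤ t := norm_nonneg _
      have ht : t < δ / A := by
        rw [htdef, ← dist_eq_norm]
        exact lt_of_lt_of_le hζ (min_le_right _ _)
      have htA : t * A < δ := (lt_div_iff₀ hA1).1 ht
      -- upper estimate for H ζ
      have e2 : |mink d x (ζ - η)| ≤ ((d:ℝ)+1) * M * t := by
        have h := abs_mink_le x (ζ - η)
        push_cast at h
        have : ((d:ℝ)+1) * ‖x‖ * t ≤ ((d:ℝ)+1) * M * t := by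
          apply mul_le_mul_of_nonneg_right _ ht0
          exact mul_le_mul_of_nonneg_left hxM (by positivity)
        rw [← htdef] at h
        linarith
      have e2' : mink d x ζ - mink d x η ≤ ((d:ℝ)+1) * M * t := by
        have := (abs_le.1 e2).2
        rw [mink_sub_right] at this
        linarith
      have e4 : |mink d p (ζ - η)| ≤ ((d:ℝ)+1) * ‖p‖ * t := by
        have h := abs_mink_le p (ζ - η)
        push_cast at h
        rw [← htdef] at h
        linarith
      have e4' : -(((d:ℝ)+1) * ‖p‖ * t) ≤ mink d p ζ - mink d p η := by
        have := (abs_le.1 e4).1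
        rw [mink_sub_right] at this
        linarith
      have e1 : mink d x ζ = H ζ := hxeq
      have e3 : mink d p ζ ≤ H ζ := hub p hpK ζ hζc
      -- combine: δ ≤ (d+1)M t + (d+1)‖p‖ t
      have hcomb : δ ≤ ((d:ℝ)+1) * M * t + ((d:ℝ)+1) * ‖p‖ * t := by
        have l1 : H η - ((d:ℝ)+1) * ‖p‖ * t ≤ H ζ := by rw [← hpη]; linarith
        have l2 : H ζ ≤ H η - δ + ((d:ℝ)+1) * M * t := by
          rw [← e1]
          have : mink d x η ≤ H η - δ := by rw [hδdef]; linarith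
          linarith
        linarith
      rw [hAdef] at htA
      nlinarith
  -- Step B: conclude differentiability
  refine HasFDerivWithinAt.of_isLittleO ?_
  rw [Asymptotics.isLittleO_iff]
  intro c hc
  have hεc : (0:ℝ) < c / ((d:ℝ)+1) := by positivity
  obtain ⟨r', hr'0, hr'le, hA⟩ := hclose (c / ((d:ℝ)+1)) hεc
  filter_upwards [Filter.eventually_mem_set.2
    (mem_nhdsWithin_of_mem_nhds (Metric.ball_mem_nhds η hr'0))] with ζ hζball
  have hζr : ζ ∈ Metric.ball η r := Metric.ball_subset_ball hr'le hζball
  have hζc := hballcone ζ hζr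
  obtain ⟨x, hxK, hxeq, hxM⟩ := hmax ζ hζr
  have hxp : ‖x - p‖ ≤ c / ((d:ℝ)+1) := hA ζ hζball x hxK hxM hxeq
  have hglb : 0 ≤ H ζ - H η - mink d p (ζ - η) := by
    have h1 : mink d p ζ ≤ H ζ := hub p hpK ζ hζc
    rw [mink_sub_right, hpη]
    linarith
  have hgub : H ζ - H η - mink d p (ζ - η) ≤ c * ‖ζ - η‖ := by
    have h1 : mink d x η ≤ H η := hub x hxK η hη
    have h2 : H ζ - H η ≤ mink d x (ζ - η) := by
      rw [mink_sub_right, ← hxeq]; linarith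
    have h3 : mink d x (ζ - η) - mink d p (ζ - η) = mink d (x - p) (ζ - η) :=
      (mink_sub_left x p (ζ - η)).symm
    have h4 : |mink d (x - p) (ζ - η)| ≤ ((d:ℝ)+1) * ‖x - p‖ * ‖ζ - η‖ := by
      have := abs_mink_le (x - p) (ζ - η)
      push_cast at this
      linarith
    have h5 : ((d:ℝ)+1) * ‖x - p‖ * ‖ζ - η‖ ≤ ((d:ℝ)+1) * (c / ((d:ℝ)+1)) * ‖ζ - η‖ := by
      apply mul_le_mul_of_nonneg_right _ (norm_nonneg _)
      exact mul_le_mul_of_nonneg_left hxp (by positivity)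
    have h6 : ((d:ℝ)+1) * (c / ((d:ℝ)+1)) = c := by field_simp
    have h7 := (abs_le.1 h4).2
    rw [h6] at h5
    linarith
  have hc0 : 0 ≤ c * ‖ζ - η‖ := mul_nonneg hc.le (norm_nonneg _)
  simp only [minkCLM_apply, Real.norm_eq_abs]
  rw [abs_le]
  constructor
  · linarith
  · linarith

end Aux

noncomputable section Main

theorem stmt14' (d : ℕ) (Γ : Subgroup ((Fin (d+1) → ℝ) ≃ₗ[ℝ] (Fin (d+1) → ℝ)))
    (K : Set (Fin (d+1) → ℝ))
    (hKne : K.Nonempty) (hKcl : IsClosed K) (hKsub : K ⊆ FutureCone d)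
    (H : (Fin (d+1) → ℝ) → ℝ)
    (hH : ∀ η ∈ FutureCone d, IsLUB ((fun x => mink d x η) '' K) (H η))
    (η : Fin (d+1) → ℝ) (hη : η ∈ FutureCone d) :
    ((∃ p, K ∩ {y | mink d y η = H η} = {p}) ↔
      DifferentiableWithinAt ℝ H (FutureCone d) η) ∧
    ∀ p, K ∩ {y | mink d y η = H η} = {p} →
      ∀ u, mink d p u = fderivWithin ℝ H (FutureCone d) η u := by
  obtain ⟨p₀, hp₀K, hp₀eq, -⟩ := Aux.attain hKne hKcl hKsub hη (hH η hη)
  have hdiff_of_sing : ∀ p, K ∩ {y | mink d y η = H η} = {p} →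
      HasFDerivWithinAt H (Aux.minkCLM d p) (FutureCone d) η :=
    fun p hp => Aux.key hKne hKcl hKsub hH hη hp
  have hconemem : FutureCone d ∈ nhds η := Aux.isOpen_cone.mem_nhds hη
  have hformula : DifferentiableWithinAt ℝ H (FutureCone d) η →
      ∀ q ∈ K ∩ {y | mink d y η = H η}, ∀ u,
        mink d q u = fderivWithin ℝ H (FutureCone d) η u := by
    intro hd q hq u
    have hfd : HasFDerivAt H (fderivWithin ℝ H (FutureCone d) η) η :=
      hd.hasFDerivWithinAt.hasFDerivAt hconemem
    have h2 : mink d q η = H η := hq.2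
    have hmin : IsLocalMin (fun ζ => H ζ - Aux.minkCLM d q ζ) η := by
      filter_upwards [hconemem] with ζ hζ
      have h1 : mink d q ζ ≤ H ζ := (hH ζ hζ).1 ⟨q, hq.1, rfl⟩
      simp only [Aux.minkCLM_apply, h2]
      linarith
    have hder : HasFDerivAt (fun ζ => H ζ - Aux.minkCLM d q ζ)
        (fderivWithin ℝ H (FutureCone d) η - Aux.minkCLM d q) η :=
      hfd.sub (Aux.minkCLM d q).hasFDerivAt
    have hz := hmin.hasFDerivAt_eq_zero hder
    have h0 : fderivWithin ℝ H (FutureCone d) η u - Aux.minkCLM d q u = 0 := by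
      rw [← ContinuousLinearMap.sub_apply, hz]; rfl
    simp only [Aux.minkCLM_apply] at h0
    linarith
  constructor
  · constructor
    · rintro ⟨p, hp⟩
      exact ⟨Aux.minkCLM d p, hdiff_of_sing p hp⟩
    · intro hd
      refine ⟨p₀, Set.eq_singleton_iff_unique_mem.2 ⟨⟨hp₀K, hp₀eq⟩, fun x hx => ?_⟩⟩
      have hx' := hformula hd x hx
      have hp' := hformula hd p₀ ⟨hp₀K, hp₀eq⟩
      have hz : ∀ u, mink d (x - p₀) u = 0 := fun u => by
        rw [Aux.mink_sub_left, hx' u, hp' u]; ring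
      exact sub_eq_zero.1 (Aux.mink_nondegenerate hz)
  · intro p hp u
    have hfdw : HasFDerivWithinAt H (Aux.minkCLM d p) (FutureCone d) η := hdiff_of_sing p hp
    have hu : UniqueDiffWithinAt ℝ (FutureCone d) η := Aux.isOpen_cone.uniqueDiffWithinAt hη
    rw [hfdw.fderivWithin hu]
    rfl

end Main

/-- The intersection of a Γ-convex body K with its support plane of inward normal η is
a single point iff the support function H is differentiable at η, and in that case the
point is the Minkowski gradient of H at η. -/
theorem stmt14 (d : ℕ) (Γ : Subgroup ((Fin (d+1) → ℝ) ≃ₗ[ℝ] (Fin (d+1) → ℝ)))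
    (hΓ : IsFuchsian d Γ) (K : Set (Fin (d+1) → ℝ))
    (hK : IsFuchsianConvexBody d Γ K) (H : (Fin (d+1) → ℝ) → ℝ)
    (hH : ∀ η ∈ FutureCone d, IsLUB ((fun x => mink d x η) '' K) (H η))
    (η : Fin (d+1) → ℝ) (hη : η ∈ FutureCone d) :
    ((∃ p, K ∩ {y | mink d y η = H η} = {p}) ↔
      DifferentiableWithinAt ℝ H (FutureCone d) η) ∧
    ∀ p, K ∩ {y | mink d y η = H η} = {p} →
      ∀ u, mink d p u = fderivWithin ℝ H (FutureCone d) η u := by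
  exact stmt14' d Γ K hK.nonempty hK.isClosed hK.subset H hH η hη
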